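/- arXiv:1504.00235 — 2 statements merged into one kernel-verified Lean document; each statement's English description precedes it below -/
import Mathlib

section
/- For fixed a > -1 and every complex z, the scaled Laguerre polynomials converge: n^{-a} L_n^a(z/n) → ∑_{k=0}^∞ (-1)^k z^k / (k! Γ(a+k+1)) as n → ∞, and the convergence is uniform on every bounded subset of ℂ. -/
open Filter

/-- The generalized Laguerre polynomial `L_n^a`, extended to complex arguments. -/
noncomputable def genLaguerreC (n : ℕ) (a : ℝ) (z : ℂ) : ℂ :=
  ∑ k ∈ Finset.range (n + 1),
    (-1 : ℂ) ^ k *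
      ((Real.Gamma ((n : ℝ) + a + 1) /
        (Real.Gamma (a + (k : ℝ) + 1) * ((n - k).factorial : ℝ)) : ℝ) : ℂ) *
      z ^ k / ((k.factorial : ℝ) : ℂ)

/-- The entire function `φ_a(z) = ∑_{k=0}^∞ (-1)^k z^k / (k! Γ(a+k+1))`, equal to
`z^{-a/2} J_a(2√z)` for `z > 0`. -/
noncomputable def phiC (a : ℝ) (z : ℂ) : ℂ :=
  ∑' k : ℕ, (-1 : ℂ) ^ k * z ^ k / ((k.factorial : ℂ) * (Real.Gamma (a + (k : ℝ) + 1) : ℂ))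

namespace MH
open Finset Topology

noncomputable def b (a : ℝ) (k : ℕ) : ℝ := 1 / (k.factorial * Real.Gamma (a + k + 1))

lemma gamma_pos {a : ℝ} (ha : -1 < a) (k : ℕ) : 0 < Real.Gamma (a + k + 1) := by
  apply Real.Gamma_pos_of_pos
  have : (0:ℝ) ≤ k := Nat.cast_nonneg k
  linarith

lemma b_pos {a : ℝ} (ha : -1 < a) (k : ℕ) : 0 < b a k := by
  have h1 := gamma_pos ha k
  have h2 : (0:ℝ) < k.factorial := by exact_mod_cast k.factorial_pos
  unfold b; positivity

lemma b_succ {a : ℝ} (ha : -1 < a) (k : ℕ) :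
    b a (k + 1) = b a k / ((k + 1) * (a + k + 1)) := by
  have h1 := gamma_pos ha k
  have hne : a + (k:ℝ) + 1 ≠ 0 := ne_of_gt (by have : (0:ℝ) ≤ k := Nat.cast_nonneg k; linarith)
  have hG : Real.Gamma (a + (k + 1 : ℕ) + 1) = (a + k + 1) * Real.Gamma (a + k + 1) := by
    have : a + ((k + 1 : ℕ) : ℝ) + 1 = (a + k + 1) + 1 := by push_cast; ring
    rw [this, Real.Gamma_add_one hne]
  have h2 : (0:ℝ) < k.factorial := by exact_mod_cast k.factorial_pos
  have hkadd : ((k+1 : ℕ).factorial : ℝ) = (k+1) * k.factorial := by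
    rw [Nat.factorial_succ]; push_cast; ring
  unfold b
  rw [hG, hkadd]
  have hk1 : (0:ℝ) < (k:ℝ) + 1 := by positivity
  field_simp

lemma akpos {a : ℝ} (ha : -1 < a) (k : ℕ) : (0:ℝ) < a + k + 1 := by
  have : (0:ℝ) ≤ k := Nat.cast_nonneg k; linarith

lemma summable_rb {a : ℝ} (ha : -1 < a) {R : ℝ} (hR : 0 < R) :
    Summable (fun k : ℕ => R ^ k * b a k) := by
  apply summable_of_ratio_test_tendsto_lt_one (l := 0) one_pos
  · filter_upwards with k
    exact ne_of_gt (by have := b_pos ha k; positivity)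
  · have heq : ∀ k : ℕ, ‖R ^ (k + 1) * b a (k + 1)‖ / ‖R ^ k * b a k‖
        = R / ((k + 1) * (a + k + 1)) := by
      intro k
      have h1 := b_pos ha k
      have h2 := b_pos ha (k + 1)
      have h3 := akpos ha k
      have h4 : (0:ℝ) < (k:ℝ) + 1 := by positivity
      rw [Real.norm_eq_abs, Real.norm_eq_abs, abs_of_pos (by positivity),
        abs_of_pos (by positivity), b_succ ha k]
      field_simp
      ring
    simp_rw [heq]
    have ht : Filter.Tendsto (fun k : ℕ => ((k:ℝ) + 1) * (a + k + 1)) atTop atTop := by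
      apply Filter.Tendsto.atTop_mul_atTop₀
      · exact tendsto_atTop_add_const_right _ 1 tendsto_natCast_atTop_atTop
      · refine Filter.Tendsto.congr (f₁ := fun k : ℕ => (k:ℝ) + (a + 1)) (fun k => by ring) ?_
        exact tendsto_atTop_add_const_right _ (a+1) tendsto_natCast_atTop_atTop
    have := ht.inv_tendsto_atTop.const_mul R
    simpa [div_eq_mul_inv] using this

lemma gamma_prod {s : ℝ} (hs : 0 < s) (m : ℕ) :
    Real.Gamma (s + m) = Real.Gamma s * ∏ j ∈ range m, (s + j) := by
  induction m with
  | zero => simp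
  | succ m ih =>
    have hne : s + (m:ℝ) ≠ 0 := by positivity
    have : s + ((m + 1 : ℕ) : ℝ) = (s + m) + 1 := by push_cast; ring
    rw [this, Real.Gamma_add_one hne, prod_range_succ, ih]
    ring

noncomputable def g (a : ℝ) (n : ℕ) : ℝ :=
  Real.Gamma (n + a + 1) / ((n:ℝ) ^ a * n.factorial)

lemma g_tendsto {a : ℝ} (ha : -1 < a) : Filter.Tendsto (g a) atTop (𝓝 1) := by
  have ha1 : (0:ℝ) < a + 1 := by linarith
  have hG1 : (0:ℝ) < Real.Gamma (a + 1) := Real.Gamma_pos_of_pos ha1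
  have hseq := Real.GammaSeq_tendsto_Gamma (a + 1)
  have h1 : Filter.Tendsto (fun n : ℕ => Real.Gamma (a + 1) / Real.GammaSeq (a + 1) n) atTop (𝓝 1) := by
    have := (tendsto_const_nhds (x := Real.Gamma (a+1)) (f := atTop (α := ℕ))).div hseq hG1.ne'
    rw [div_self hG1.ne'] at this
    exact this
  have h2 : Filter.Tendsto (fun n : ℕ => (n:ℝ) / ((n:ℝ) + a + 1)) atTop (𝓝 1) := by
    have hinv : Filter.Tendsto (fun n : ℕ => 1 + (a + 1) * ((n:ℝ))⁻¹) atTop (𝓝 1) := by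
      have := (tendsto_inv_atTop_nhds_zero_nat (𝕜 := ℝ)).const_mul (a + 1)
      simpa using (tendsto_const_nhds (x := (1:ℝ))).add this
    have h3 : Filter.Tendsto (fun n : ℕ => (1 + (a + 1) * ((n:ℝ))⁻¹)⁻¹) atTop (𝓝 1) := by
      simpa using hinv.inv₀ (by norm_num : (1:ℝ) ≠ 0)
    refine h3.congr' ?_
    filter_upwards [eventually_gt_atTop 0] with n hn
    have hn0 : (0:ℝ) < n := by exact_mod_cast hn
    have hna : (0:ℝ) < (n:ℝ) + a + 1 := by linarith
    rw [show (1 + (a+1)*(n:ℝ)⁻¹) = ((n:ℝ)+a+1)/n by field_simp; ring, inv_div]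
  have key : (fun n : ℕ => ((n:ℝ) / ((n:ℝ) + a + 1)) * (Real.Gamma (a + 1) / Real.GammaSeq (a + 1) n))
      =ᶠ[atTop] g a := by
    filter_upwards [eventually_gt_atTop 0] with n hn
    have hn0 : (0:ℝ) < n := by exact_mod_cast hn
    have hprod : ∏ j ∈ range (n + 1), (a + 1 + j) = Real.Gamma (n + a + 2) / Real.Gamma (a + 1) := by
      have := gamma_prod ha1 (n + 1)
      have hcast : a + 1 + ((n + 1 : ℕ) : ℝ) = (n:ℝ) + a + 2 := by push_cast; ring
      rw [hcast] at this
      rw [this]; field_simp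
    have hGn1 : (0:ℝ) < Real.Gamma ((n:ℝ) + a + 1) :=
      Real.Gamma_pos_of_pos (by linarith)
    have hGn2 : Real.Gamma ((n:ℝ) + a + 2) = ((n:ℝ) + a + 1) * Real.Gamma ((n:ℝ) + a + 1) := by
      have : (n:ℝ) + a + 2 = ((n:ℝ) + a + 1) + 1 := by ring
      rw [this, Real.Gamma_add_one (ne_of_gt (by linarith) : ((n:ℝ) + a + 1) ≠ 0)]
    have hpow : (n:ℝ) ^ (a + 1) = (n:ℝ) ^ a * n := by
      rw [Real.rpow_add hn0, Real.rpow_one]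
    have hfac : (0:ℝ) < n.factorial := by exact_mod_cast n.factorial_pos
    have hrpow : (0:ℝ) < (n:ℝ) ^ a := Real.rpow_pos_of_pos hn0 a
    have hna1 : (0:ℝ) < (n:ℝ) + a + 1 := by linarith
    rw [Real.GammaSeq, hprod, hpow]
    unfold g
    field_simp
    rw [hGn2]
  have := (h2.mul h1)
  rw [one_mul] at this
  exact this.congr' key

noncomputable def c (a : ℝ) (n k : ℕ) : ℝ :=
  if k ≤ n then
    Real.Gamma (n + a + 1) / (((n - k).factorial : ℝ) * (n:ℝ) ^ a * (n:ℝ) ^ k)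
  else 0

lemma g_nonneg {a : ℝ} (ha : -1 < a) (n : ℕ) : 0 ≤ g a n := by
  have h1 : 0 < Real.Gamma ((n:ℝ) + a + 1) :=
    Real.Gamma_pos_of_pos (by have : (0:ℝ) ≤ n := Nat.cast_nonneg n; linarith)
  have h2 : (0:ℝ) ≤ (n:ℝ) ^ a := Real.rpow_nonneg (Nat.cast_nonneg n) a
  have h3 : (0:ℝ) ≤ n.factorial := Nat.cast_nonneg _
  exact div_nonneg h1.le (by positivity)

lemma c_nonneg {a : ℝ} (ha : -1 < a) (n k : ℕ) : 0 ≤ c a n k := by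
  unfold c
  split
  · have h1 : 0 < Real.Gamma ((n:ℝ) + a + 1) :=
      Real.Gamma_pos_of_pos (by have : (0:ℝ) ≤ n := Nat.cast_nonneg n; linarith)
    have h2 : (0:ℝ) ≤ (n:ℝ) ^ a := Real.rpow_nonneg (Nat.cast_nonneg n) a
    have h3 : (0:ℝ) ≤ (n - k).factorial := Nat.cast_nonneg _
    have h4 : (0:ℝ) ≤ (n:ℝ) ^ k := by positivity
    exact div_nonneg h1.le (by positivity)
  · exact le_refl _

lemma c_le_g {a : ℝ} (ha : -1 < a) {n : ℕ} (hn : 1 ≤ n) (k : ℕ) : c a n k ≤ g a n := by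
  unfold c
  split
  case isTrue h =>
    have hn0 : (0:ℝ) < n := by exact_mod_cast hn
    have h1 : 0 < Real.Gamma ((n:ℝ) + a + 1) :=
      Real.Gamma_pos_of_pos (by linarith)
    have h2 : (0:ℝ) < (n:ℝ) ^ a := Real.rpow_pos_of_pos hn0 a
    have hfac : (0:ℝ) < n.factorial := by exact_mod_cast n.factorial_pos
    unfold g
    apply div_le_div_of_nonneg_left h1.le (by positivity)
    have hkey : (n.factorial : ℝ) ≤ ((n - k).factorial : ℝ) * (n:ℝ) ^ k := by
      have h5 : n.factorial = (n - k).factorial * n.descFactorial k :=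
        (Nat.factorial_mul_descFactorial h).symm
      have h6 : n.descFactorial k ≤ n ^ k := Nat.descFactorial_le_pow n k
      calc (n.factorial : ℝ) = ((n - k).factorial : ℝ) * (n.descFactorial k : ℝ) := by
            exact_mod_cast congrArg (Nat.cast : ℕ → ℝ) h5
        _ ≤ ((n - k).factorial : ℝ) * (n:ℝ) ^ k := by
            have : ((n.descFactorial k : ℕ) : ℝ) ≤ ((n ^ k : ℕ) : ℝ) := by exact_mod_cast h6
            push_cast at this
            exact mul_le_mul_of_nonneg_left this (Nat.cast_nonneg _)
    calc (n:ℝ) ^ a * n.factorial ≤ (n:ℝ) ^ a * (((n - k).factorial : ℝ) * (n:ℝ) ^ k) :=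
          mul_le_mul_of_nonneg_left hkey h2.le
      _ = ((n - k).factorial : ℝ) * (n:ℝ) ^ a * (n:ℝ) ^ k := by ring
  case isFalse h => exact g_nonneg ha n

lemma c_eq {a : ℝ} {n k : ℕ} (h : k ≤ n) (hn : 1 ≤ n) :
    c a n k = g a n * ∏ j ∈ range k, (((n:ℝ) - j) / n) := by
  have hn0 : (0:ℝ) < n := by exact_mod_cast hn
  have h2 : (0:ℝ) < (n:ℝ) ^ a := Real.rpow_pos_of_pos hn0 a
  have hfac : (0:ℝ) < n.factorial := by exact_mod_cast n.factorial_pos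
  have hfac2 : (0:ℝ) < (n - k).factorial := by exact_mod_cast (n-k).factorial_pos
  have hdesc : (n.factorial : ℝ) = ((n - k).factorial : ℝ) * (n.descFactorial k : ℝ) := by
    exact_mod_cast congrArg (Nat.cast : ℕ → ℝ) (Nat.factorial_mul_descFactorial h).symm
  have hprod : (n.descFactorial k : ℝ) = ∏ j ∈ range k, ((n:ℝ) - j) := by
    rw [Nat.descFactorial_eq_prod_range]
    push_cast [Nat.cast_sub]
    refine prod_congr rfl fun j hj => ?_
    rw [Nat.cast_sub (le_of_lt (lt_of_lt_of_le (mem_range.mp hj) h))]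
  rw [c, if_pos h, g, prod_div_distrib, prod_const, card_range, ← hprod]
  rw [eq_comm, div_mul_div_comm, div_eq_div_iff (by positivity) (by positivity)]
  rw [hdesc]; ring

lemma c_tendsto {a : ℝ} (ha : -1 < a) (k : ℕ) :
    Filter.Tendsto (fun n => c a n k) atTop (𝓝 1) := by
  have hprod : Filter.Tendsto (fun n : ℕ => ∏ j ∈ range k, (((n:ℝ) - j) / n)) atTop (𝓝 1) := by
    have : Filter.Tendsto (fun n : ℕ => ∏ j ∈ range k, (1 - (j:ℝ) * ((n:ℝ))⁻¹)) atTop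
        (𝓝 (∏ j ∈ range k, 1)) := by
      apply tendsto_finset_prod
      intro j _
      have := (tendsto_inv_atTop_nhds_zero_nat (𝕜 := ℝ)).const_mul (j:ℝ)
      simpa using (tendsto_const_nhds (x := (1:ℝ))).sub this
    rw [prod_const_one] at this
    refine this.congr' ?_
    filter_upwards [eventually_gt_atTop 0] with n hn
    refine prod_congr rfl fun j _ => ?_
    have hn0 : (0:ℝ) < n := by exact_mod_cast hn
    field_simp
  have := (g_tendsto ha).mul hprod
  rw [one_mul] at this
  refine this.congr' ?_
  filter_upwards [eventually_ge_atTop (max k 1)] with n hn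
  exact (c_eq (le_trans (le_max_left _ _) hn) (le_trans (le_max_right _ _) hn)).symm

lemma lag_eq {a : ℝ} (ha : -1 < a) {n : ℕ} (hn : 1 ≤ n) (z : ℂ) :
    (((n : ℝ) ^ (-a) : ℝ) : ℂ) * genLaguerreC n a (z / (n : ℂ)) =
      ∑ k ∈ range (n + 1), (-1 : ℂ) ^ k * ((c a n k : ℝ) : ℂ) * z ^ k * ((b a k : ℝ) : ℂ) := by
  unfold genLaguerreC
  rw [mul_sum]
  refine sum_congr rfl fun k hk => ?_
  have hkn : k ≤ n := Nat.lt_succ_iff.mp (mem_range.mp hk)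
  have hn0 : (0:ℝ) < n := by exact_mod_cast hn
  have hG : (0:ℝ) < Real.Gamma (a + k + 1) := gamma_pos ha k
  have hpa : (0:ℝ) < (n:ℝ) ^ a := Real.rpow_pos_of_pos hn0 a
  rw [c, if_pos hkn, b, Real.rpow_neg (Nat.cast_nonneg n)]
  have hnC : ((n:ℝ):ℂ) ≠ 0 := by exact_mod_cast hn0.ne'
  have hpaC : (((n:ℝ) ^ a : ℝ) : ℂ) ≠ 0 := by exact_mod_cast hpa.ne'
  have hGC : ((Real.Gamma (a + k + 1) : ℝ) : ℂ) ≠ 0 := by exact_mod_cast hG.ne'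
  have hkf : ((k.factorial : ℝ) : ℂ) ≠ 0 := by
    exact_mod_cast (Nat.cast_pos.mpr k.factorial_pos).ne' (α := ℝ)
  have hnkf : (((n - k).factorial : ℝ) : ℂ) ≠ 0 := by
    exact_mod_cast (Nat.cast_pos.mpr (n - k).factorial_pos).ne' (α := ℝ)
  push_cast
  rw [div_pow]
  field_simp

end MH

open Topology in
/-- Mehler–Heine asymptotics: for fixed `a > -1`, `n^{-a} L_n^a(z/n) → φ_a(z)` as
`n → ∞`, uniformly on every bounded subset of `ℂ` (hence pointwise for every `z`). -/
theorem mehler_heine (a : ℝ) (ha : -1 < a) (S : Set ℂ) (hS : Bornology.IsBounded S) :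
    TendstoUniformlyOn
      (fun (n : ℕ) (z : ℂ) => (((n : ℝ) ^ (-a) : ℝ) : ℂ) * genLaguerreC n a (z / (n : ℂ)))
      (fun z => phiC a z) atTop S := by
  obtain ⟨C, hC⟩ := isBounded_iff_forall_norm_le.mp hS
  set R : ℝ := max C 1 with hRdef
  have hR : 0 < R := lt_of_lt_of_le one_pos (le_max_right _ _)
  have hRz : ∀ z ∈ S, ‖z‖ ≤ R := fun z hz => (hC z hz).trans (le_max_left _ _)
  have hsum : Summable (fun k : ℕ => R ^ k * MH.b a k) := MH.summable_rb ha hR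
  set e : ℕ → ℕ → ℝ := fun n k => |MH.c a n k - 1| * (R ^ k * MH.b a k) with he
  have hrb_nonneg : ∀ k, 0 ≤ R ^ k * MH.b a k := fun k => by
    have := MH.b_pos ha k; positivity
  have he_nonneg : ∀ n k, 0 ≤ e n k := fun n k =>
    mul_nonneg (abs_nonneg _) (hrb_nonneg k)
  have he_le : ∀ n, 1 ≤ n → ∀ k, e n k ≤ (MH.g a n + 1) * (R ^ k * MH.b a k) := by
    intro n hn k
    apply mul_le_mul_of_nonneg_right _ (hrb_nonneg k)
    calc |MH.c a n k - 1| ≤ |MH.c a n k| + |1| := abs_sub _ _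
      _ = MH.c a n k + 1 := by rw [abs_of_nonneg (MH.c_nonneg ha n k), abs_one]
      _ ≤ MH.g a n + 1 := by have := MH.c_le_g ha hn k; linarith
  have hsummable_e : ∀ n, 1 ≤ n → Summable (e n) := fun n hn =>
    Summable.of_nonneg_of_le (he_nonneg n) (he_le n hn) (hsum.mul_left _)
  set D : ℕ → ℝ := fun n => ∑' k, e n k with hD
  have hD0 : Filter.Tendsto D atTop (𝓝 0) := by
    have h0 : (0:ℝ) = ∑' _ : ℕ, (0:ℝ) := by simp
    rw [hD, h0]
    apply tendsto_tsum_of_dominated_convergence (bound := fun k => 3 * (R ^ k * MH.b a k))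
      (hsum.mul_left 3)
    · intro k
      have hc := MH.c_tendsto ha k
      have h1 : Filter.Tendsto (fun n => |MH.c a n k - 1|) atTop (𝓝 |1 - 1|) :=
        (hc.sub tendsto_const_nhds).abs
      have := h1.mul_const (R ^ k * MH.b a k)
      simpa using this
    · have hg2 : ∀ᶠ n in atTop, MH.g a n ≤ 2 :=
        (MH.g_tendsto ha).eventually_le_const (by norm_num : (1:ℝ) < 2)
      filter_upwards [hg2, Filter.eventually_ge_atTop 1] with n hg hn k
      rw [Real.norm_eq_abs, abs_of_nonneg (he_nonneg n k)]
      calc e n k ≤ (MH.g a n + 1) * (R ^ k * MH.b a k) := he_le n hn k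
        _ ≤ 3 * (R ^ k * MH.b a k) :=
          mul_le_mul_of_nonneg_right (by linarith) (hrb_nonneg k)
  have hdist : ∀ n : ℕ, 1 ≤ n → ∀ z ∈ S,
      dist (phiC a z) ((((n : ℝ) ^ (-a) : ℝ) : ℂ) * genLaguerreC n a (z / (n : ℂ))) ≤ D n := by
    intro n hn z hz
    set G : ℕ → ℂ := fun k => (-1 : ℂ) ^ k * z ^ k * ((MH.b a k : ℝ) : ℂ) with hG
    set F : ℕ → ℂ := fun k =>
      (-1 : ℂ) ^ k * ((MH.c a n k : ℝ) : ℂ) * z ^ k * ((MH.b a k : ℝ) : ℂ) with hF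
    have hnormG : ∀ k, ‖G k‖ = ‖z‖ ^ k * MH.b a k := by
      intro k
      rw [hG]
      simp only [norm_mul, norm_pow, norm_neg, norm_one, one_pow, one_mul,
        Complex.norm_real, Real.norm_eq_abs, abs_of_pos (MH.b_pos ha k)]
    have hGsum : Summable G := by
      apply Summable.of_norm_bounded hsum
      intro k
      rw [hnormG k]
      exact mul_le_mul_of_nonneg_right (pow_le_pow_left₀ (norm_nonneg z) (hRz z hz) k)
        (MH.b_pos ha k).le
    have hFzero : ∀ k ∉ Finset.range (n + 1), F k = 0 := by
      intro k hk
      have : ¬ k ≤ n := by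
        intro h; exact hk (Finset.mem_range.mpr (Nat.lt_succ_of_le h))
      rw [hF]
      simp [MH.c, this]
    have hFsum : Summable F := summable_of_ne_finset_zero hFzero
    have hGF : ∀ k, ‖G k - F k‖ ≤ e n k := by
      intro k
      have heq : G k - F k = ((1 : ℂ) - ((MH.c a n k : ℝ) : ℂ)) * G k := by
        rw [hG, hF]; ring
      rw [heq, norm_mul, hnormG k]
      have h1 : ‖(1 : ℂ) - ((MH.c a n k : ℝ) : ℂ)‖ = |MH.c a n k - 1| := by
        rw [show (1 : ℂ) - ((MH.c a n k : ℝ) : ℂ) = (((1 - MH.c a n k : ℝ)) : ℂ) by push_cast; ring,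
          Complex.norm_real, Real.norm_eq_abs, abs_sub_comm]
      rw [h1, he]
      have := mul_le_mul_of_nonneg_right (pow_le_pow_left₀ (norm_nonneg z) (hRz z hz) k)
        (MH.b_pos ha k).le
      calc |MH.c a n k - 1| * (‖z‖ ^ k * MH.b a k)
          ≤ |MH.c a n k - 1| * (R ^ k * MH.b a k) :=
            mul_le_mul_of_nonneg_left this (abs_nonneg _)
        _ = _ := rfl
    have hGFsum : Summable (fun k => ‖G k - F k‖) :=
      Summable.of_nonneg_of_le (fun k => norm_nonneg _) hGF (hsummable_e n hn)
    have hphi : phiC a z = ∑' k, G k := by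
      unfold phiC
      apply tsum_congr
      intro k
      rw [hG]
      show _ = (-1 : ℂ) ^ k * z ^ k * ((MH.b a k : ℝ) : ℂ)
      rw [MH.b]
      have h1 := MH.gamma_pos ha k
      have h2 : (0:ℝ) < k.factorial := by exact_mod_cast k.factorial_pos
      push_cast
      ring
    have hlag : (((n : ℝ) ^ (-a) : ℝ) : ℂ) * genLaguerreC n a (z / (n : ℂ)) = ∑' k, F k := by
      rw [MH.lag_eq ha hn z, tsum_eq_sum hFzero]
    rw [dist_eq_norm, hphi, hlag, ← Summable.tsum_sub hGsum hFsum]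
    calc ‖∑' k, (G k - F k)‖ ≤ ∑' k, ‖G k - F k‖ := norm_tsum_le_tsum_norm hGFsum
      _ ≤ ∑' k, e n k := Summable.tsum_le_tsum hGF hGFsum (hsummable_e n hn)
  rw [Metric.tendstoUniformlyOn_iff]
  intro ε hε
  filter_upwards [hD0.eventually_lt_const hε, Filter.eventually_ge_atTop 1] with n h1 h2 z hz
  exact lt_of_le_of_lt (hdist n h2 z hz) h1
end

section
/- Let (X, ν) be a measure space with ν(X) < ∞, and let K, L : X × X → ℝ be bounded measurable kernels whose induced integral operators on L²(ν) are trace class with Fredholm determinants defined via the standard series det(I-K) = ∑_{m=0}^∞ ((-1)^m/m!) ∫ det(K(x_i,x_j))_{i,j≤m} dν^m. If ‖K‖_∞, ‖L‖_∞ ≤ M, then |det(I-K) - det(I-L)| ≤ c(M, ν(X)) · ‖K - L‖_∞ for a constant c(M, ν(X)) depending only on M and ν(X). -/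
open MeasureTheory

/-- The Fredholm determinant of a kernel `K` on a measure space `(X, ν)`, defined via the
standard series `det(I-K) = ∑_{m=0}^∞ ((-1)^m/m!) ∫ det(K(x_i,x_j))_{i,j≤m} dν^m`. -/
noncomputable def fredholmDet {X : Type*} [MeasurableSpace X] (ν : Measure X)
    (K : X → X → ℝ) : ℝ :=
  ∑' m : ℕ, ((-1 : ℝ) ^ m / (m.factorial : ℝ)) *
    ∫ x : Fin m → X, Matrix.det (Matrix.of fun i j => K (x i) (x j))
      ∂(Measure.pi fun _ => ν)

lemma nat_pow_le_four_pow_mul_factorial (m : ℕ) : m ^ m ≤ 4 ^ m * m.factorial := by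
  have h1 : m.factorial * (m + 1) ^ m ≤ (m + m).factorial :=
    Nat.factorial_mul_pow_le_factorial
  have h2 : (m + m).factorial ≤ 4 ^ m * (m.factorial * m.factorial) := by
    have hc : (m + m).choose m ≤ 4 ^ m := by
      calc (m + m).choose m ≤ (2 * m + 1).choose m :=
            Nat.choose_le_choose m (by omega)
        _ ≤ 4 ^ m := Nat.choose_middle_le_pow m
    have := Nat.choose_mul_factorial_mul_factorial (Nat.le_add_right m m)
    calc (m + m).factorial = (m + m).choose m * m.factorial * ((m+m) - m).factorial :=
          this.symm
      _ = (m + m).choose m * (m.factorial * m.factorial) := by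
          rw [Nat.add_sub_cancel_left]; ring
      _ ≤ 4 ^ m * (m.factorial * m.factorial) :=
          Nat.mul_le_mul_right _ hc
  have h3 : m.factorial * m ^ m ≤ m.factorial * (4 ^ m * m.factorial) := by
    calc m.factorial * m ^ m ≤ m.factorial * (m+1) ^ m :=
          Nat.mul_le_mul_left _ (Nat.pow_le_pow_left (Nat.le_succ m) m)
      _ ≤ (m + m).factorial := h1
      _ ≤ 4 ^ m * (m.factorial * m.factorial) := h2
      _ = m.factorial * (4 ^ m * m.factorial) := by ring
  exact Nat.le_of_mul_le_mul_left h3 m.factorial_pos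

lemma sqrt_pow_eq {x : ℝ} (hx : 0 ≤ x) (m : ℕ) :
    Real.sqrt x ^ m = Real.sqrt (x ^ m) := by
  have h : (Real.sqrt x ^ m) ^ 2 = x ^ m := by
    rw [← pow_mul, mul_comm, pow_mul, Real.sq_sqrt hx]
  rw [← h, Real.sqrt_sq (pow_nonneg (Real.sqrt_nonneg x) m)]

lemma sqrt_pow_le (m : ℕ) :
    Real.sqrt m ^ m ≤ 2 ^ m * Real.sqrt m.factorial := by
  rw [sqrt_pow_eq (Nat.cast_nonneg m)]
  have h1 : ((m : ℝ) ^ m) ≤ 4 ^ m * m.factorial := by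
    exact_mod_cast nat_pow_le_four_pow_mul_factorial m
  calc Real.sqrt ((m:ℝ) ^ m) ≤ Real.sqrt (4 ^ m * m.factorial) :=
        Real.sqrt_le_sqrt h1
    _ = 2 ^ m * Real.sqrt m.factorial := by
        rw [Real.sqrt_mul (by positivity), ← sqrt_pow_eq (by norm_num : (0:ℝ) ≤ 4),
          show Real.sqrt 4 = 2 by
            rw [show (4:ℝ) = 2^2 by norm_num, Real.sqrt_sq (by norm_num : (0:ℝ) ≤ 2)]]

lemma summable_master {q : ℝ} (hq : 0 ≤ q) :
    Summable (fun m : ℕ => (m + 1) * Real.sqrt m ^ m * q ^ m / m.factorial) := by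
  -- bound: (m+1) √m^m q^m / m! ≤ (m+1) (2q)^m / √(m!) ≤ √C (m+1) (1/2)^m
  set C : ℝ := ∑' k : ℕ, (16 * q ^ 2) ^ k / k.factorial with hC
  have hCs : Summable (fun k : ℕ => (16 * q ^ 2) ^ k / k.factorial) :=
    Real.summable_pow_div_factorial _
  have hCnn : ∀ k : ℕ, (0:ℝ) ≤ (16 * q ^ 2) ^ k / k.factorial := by
    intro k; positivity
  have hterm : ∀ m : ℕ, (16 * q ^ 2) ^ m / m.factorial ≤ C :=
    fun m => hCs.le_tsum m fun k _ => hCnn k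
  have key : ∀ m : ℕ, (m + 1) * Real.sqrt m ^ m * q ^ m / m.factorial
      ≤ Real.sqrt C * ((m + 1) * (1/2 : ℝ) ^ m) := by
    intro m
    have hf : (0:ℝ) < m.factorial := by exact_mod_cast m.factorial_pos
    have h1 : (m + 1) * Real.sqrt m ^ m * q ^ m / m.factorial
        ≤ (m + 1) * (2 ^ m * Real.sqrt m.factorial) * q ^ m / m.factorial := by
      have := sqrt_pow_le m
      gcongr
    have h2 : (m + 1) * (2 ^ m * Real.sqrt m.factorial) * q ^ m / m.factorial
        = (m + 1) * ((2 * q) ^ m / Real.sqrt m.factorial) := by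
      have e : (m + 1) * (2 ^ m * Real.sqrt m.factorial) * q ^ m / m.factorial
          = (m + 1) * ((2 * q) ^ m * (Real.sqrt m.factorial / m.factorial)) := by
        rw [mul_pow]; ring
      rw [e, Real.sqrt_div_self', mul_one_div]
    have h3 : (2 * q) ^ m / Real.sqrt m.factorial ≤ Real.sqrt C * (1/2 : ℝ) ^ m := by
      have e1 : (2 * q) ^ m / Real.sqrt m.factorial
          = Real.sqrt ((4 * q ^ 2) ^ m / m.factorial) := by
        rw [Real.sqrt_div (by positivity) , ← sqrt_pow_eq (by positivity),
          show (4 * q ^ 2 : ℝ) = (2 * q) ^ 2 by ring, Real.sqrt_sq (by positivity)]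
      have e2 : (4 * q ^ 2 : ℝ) ^ m / m.factorial ≤ C * (1/4 : ℝ) ^ m := by
        have h16 : ((16 : ℝ) * q ^ 2) ^ m = 4 ^ m * (4 * q ^ 2) ^ m := by
          rw [← mul_pow]; ring_nf
        have := hterm m
        rw [h16] at this
        rw [div_le_iff₀ hf] at this ⊢
        calc (4 * q ^ 2 : ℝ) ^ m = (4 ^ m * (4 * q ^ 2) ^ m) * (1/4 : ℝ) ^ m := by
              rw [mul_assoc, mul_comm ((4 * q ^ 2 : ℝ) ^ m), ← mul_assoc, ← mul_pow]
              norm_num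
          _ ≤ (C * m.factorial) * (1/4 : ℝ) ^ m := by gcongr
          _ = C * (1/4 : ℝ) ^ m * m.factorial := by ring
      calc (2 * q) ^ m / Real.sqrt m.factorial
          = Real.sqrt ((4 * q ^ 2) ^ m / m.factorial) := e1
        _ ≤ Real.sqrt (C * (1/4 : ℝ) ^ m) := Real.sqrt_le_sqrt e2
        _ = Real.sqrt C * (1/2 : ℝ) ^ m := by
            rw [Real.sqrt_mul (tsum_nonneg hCnn),
              ← sqrt_pow_eq (by norm_num : (0:ℝ) ≤ 1/4),
              show Real.sqrt (1/4 : ℝ) = 1/2 by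
                rw [show (1/4 : ℝ) = (1/2)^2 by norm_num, Real.sqrt_sq (by norm_num : (0:ℝ) ≤ 1/2)]]
    calc (m + 1) * Real.sqrt m ^ m * q ^ m / m.factorial
        ≤ (m + 1) * (2 ^ m * Real.sqrt m.factorial) * q ^ m / m.factorial := h1
      _ = (m + 1) * ((2 * q) ^ m / Real.sqrt m.factorial) := h2
      _ ≤ (m + 1) * (Real.sqrt C * (1/2 : ℝ) ^ m) := by
          gcongr
      _ = Real.sqrt C * ((m + 1) * (1/2 : ℝ) ^ m) := by ring
  have hsum : Summable (fun m : ℕ => Real.sqrt C * ((m + 1) * (1/2 : ℝ) ^ m)) := by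
    apply Summable.mul_left
    have h := summable_pow_mul_geometric_of_norm_lt_one 1 (r := (1/2 : ℝ)) (by norm_num)
    have h2 := summable_geometric_of_lt_one (by norm_num) (by norm_num : (1/2:ℝ) < 1)
    simpa [add_mul, pow_one] using h.add h2
  exact Summable.of_nonneg_of_le (fun m => by positivity) key hsum

lemma hadamard {n : ℕ} (A : Matrix (Fin n) (Fin n) ℝ) :
    |A.det| ≤ ∏ i : Fin n, Real.sqrt (∑ j : Fin n, A i j ^ 2) := by
  haveI : Fact (Module.finrank ℝ (EuclideanSpace ℝ (Fin n)) = n) :=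
    ⟨finrank_euclideanSpace_fin⟩
  set b := EuclideanSpace.basisFun (Fin n) ℝ with hb
  set o : Orientation ℝ (EuclideanSpace ℝ (Fin n)) (Fin n) := b.toBasis.orientation with ho
  set v : Fin n → EuclideanSpace ℝ (Fin n) := fun i => (WithLp.equiv 2 _).symm (A i) with hv
  have h1 := o.abs_volumeForm_apply_le v
  have h2 := o.volumeForm_robust' b v
  have h3 : b.toBasis.det v = A.det := by
    rw [Module.Basis.det_apply]
    have : b.toBasis.toMatrix v = A.transpose := by
      ext i j
      simp [Module.Basis.toMatrix_apply, hv, hb]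
    rw [this, Matrix.det_transpose]
  have h4 : ∀ i, ‖v i‖ = Real.sqrt (∑ j, A i j ^ 2) := by
    intro i
    rw [EuclideanSpace.norm_eq]
    congr 1
    refine Finset.sum_congr rfl fun j _ => ?_
    simp [hv, sq_abs]
  calc |A.det| = |o.volumeForm v| := by rw [h2, h3]
    _ ≤ ∏ i, ‖v i‖ := h1
    _ = ∏ i, Real.sqrt (∑ j, A i j ^ 2) := Finset.prod_congr rfl fun i _ => h4 i

lemma det_le_of_row_bound {n : ℕ} (A : Matrix (Fin n) (Fin n) ℝ) (c : Fin n → ℝ)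
    (hc : ∀ i, 0 ≤ c i) (h : ∀ i j, |A i j| ≤ c i) :
    |A.det| ≤ Real.sqrt n ^ n * ∏ i, c i := by
  refine (hadamard A).trans ?_
  have step : ∀ i : Fin n, Real.sqrt (∑ j : Fin n, A i j ^ 2) ≤ Real.sqrt n * c i := by
    intro i
    have hb : (∑ j : Fin n, A i j ^ 2) ≤ n * c i ^ 2 := by
      calc (∑ j : Fin n, A i j ^ 2) ≤ ∑ _j : Fin n, c i ^ 2 := by
            refine Finset.sum_le_sum fun j _ => ?_
            rw [← sq_abs]
            exact pow_le_pow_left₀ (abs_nonneg _) (h i j) 2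
        _ = n * c i ^ 2 := by rw [Finset.sum_const, Finset.card_univ, Fintype.card_fin,
              nsmul_eq_mul]
    calc Real.sqrt (∑ j : Fin n, A i j ^ 2) ≤ Real.sqrt (n * c i ^ 2) :=
          Real.sqrt_le_sqrt hb
      _ = Real.sqrt n * c i := by
          rw [Real.sqrt_mul (Nat.cast_nonneg n), Real.sqrt_sq (hc i)]
  calc (∏ i : Fin n, Real.sqrt (∑ j : Fin n, A i j ^ 2))
      ≤ ∏ i : Fin n, (Real.sqrt n * c i) :=
        Finset.prod_le_prod (fun i _ => Real.sqrt_nonneg _) (fun i _ => step i)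
    _ = Real.sqrt n ^ n * ∏ i, c i := by
        rw [Finset.prod_mul_distrib, Finset.prod_const, Finset.card_univ, Fintype.card_fin]

lemma det_le_of_bound {n : ℕ} (A : Matrix (Fin n) (Fin n) ℝ) (M : ℝ) (hM : 0 ≤ M)
    (h : ∀ i j, |A i j| ≤ M) : |A.det| ≤ Real.sqrt n ^ n * M ^ n := by
  have := det_le_of_row_bound A (fun _ => M) (fun _ => hM) h
  simpa [Finset.prod_const, Finset.card_univ] using this

lemma det_sub_le {n : ℕ} (A B : Matrix (Fin n) (Fin n) ℝ) {M δ : ℝ} (hM : 0 ≤ M)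
    (hδ : 0 ≤ δ) (hA : ∀ i j, |A i j| ≤ M) (hB : ∀ i j, |B i j| ≤ M)
    (hAB : ∀ i j, |A i j - B i j| ≤ δ) :
    |A.det - B.det| ≤ n * Real.sqrt n ^ n * M ^ (n - 1) * δ := by
  set C : ℕ → Matrix (Fin n) (Fin n) ℝ :=
    fun i => Matrix.of fun k j => if (k : ℕ) < i then B k j else A k j with hC
  have hC0 : C 0 = A := by ext k j; simp [hC]
  have hCn : C n = B := by ext k j; simp [hC, k.isLt]
  have tele : ∑ i ∈ Finset.range n, ((C (i+1)).det - (C i).det) = B.det - A.det := by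
    rw [Finset.sum_range_sub (fun i => (C i).det), hC0, hCn]
  have hstep : ∀ i ∈ Finset.range n,
      |(C (i+1)).det - (C i).det| ≤ Real.sqrt n ^ n * (M ^ (n-1) * δ) := by
    intro i hi
    rw [Finset.mem_range] at hi
    set r : Fin n := ⟨i, hi⟩ with hr
    have e1 : C (i+1) = (C i).updateRow r (B r) := by
      ext k j
      rcases eq_or_ne k r with rfl | hk
      · simp [hC, Matrix.updateRow_self, hr]
      · rw [Matrix.updateRow_ne hk]
        have : (k : ℕ) ≠ i := fun h => hk (by ext; simp [h, hr])
        simp only [hC, Matrix.of_apply]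
        by_cases h : (k : ℕ) < i
        · rw [if_pos h, if_pos (by omega)]
        · rw [if_neg h, if_neg (by omega)]
    have e2 : C i = (C i).updateRow r (A r) := by
      have : (C i) r = A r := by
        funext j; simp [hC, hr]
      conv_lhs => rw [← Matrix.updateRow_eq_self (C i) r]
      rw [this]
    have e3 : (C (i+1)).det - (C i).det = ((C i).updateRow r (B r - A r)).det := by
      have := Matrix.det_updateRow_add (C i) r (B r - A r) (A r)
      rw [sub_add_cancel] at this
      rw [e1, this, ← e2]; ring
    rw [e3]
    refine det_le_of_row_bound _ (fun k => if k = r then δ else M)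
      (fun k => by split <;> assumption) (fun k j => ?_) |>.trans ?_
    · rcases eq_or_ne k r with rfl | hk
      · rw [Matrix.updateRow_self, if_pos rfl]
        rw [Pi.sub_apply, abs_sub_comm]
        exact hAB _ j
      · rw [Matrix.updateRow_ne hk, if_neg hk]
        simp only [hC, Matrix.of_apply]
        split
        · exact hB k j
        · exact hA k j
    · have : (∏ k : Fin n, if k = r then δ else M) = δ * M ^ (n - 1) := by
        rw [← Finset.mul_prod_erase Finset.univ _ (Finset.mem_univ r), if_pos rfl]
        congr 1
        rw [Finset.prod_congr rfl (fun k hk => if_neg (Finset.mem_erase.mp hk).1),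
          Finset.prod_const, Finset.card_erase_of_mem (Finset.mem_univ r),
          Finset.card_univ, Fintype.card_fin]
      rw [this]
      ring_nf
      exact le_refl _
  calc |A.det - B.det| = |∑ i ∈ Finset.range n, ((C (i+1)).det - (C i).det)| := by
        rw [tele, abs_sub_comm]
    _ ≤ ∑ i ∈ Finset.range n, |(C (i+1)).det - (C i).det| :=
        Finset.abs_sum_le_sum_abs _ _
    _ ≤ ∑ _i ∈ Finset.range n, Real.sqrt n ^ n * (M ^ (n-1) * δ) :=
        Finset.sum_le_sum hstep
    _ = n * Real.sqrt n ^ n * M ^ (n - 1) * δ := by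
        rw [Finset.sum_const, Finset.card_range, nsmul_eq_mul]; ring

lemma measurable_det_kernel {X : Type*} [MeasurableSpace X] {K : X → X → ℝ}
    (hK : Measurable (Function.uncurry K)) (m : ℕ) :
    Measurable (fun x : Fin m → X => (Matrix.of fun i j => K (x i) (x j)).det) := by
  simp_rw [Matrix.det_apply]
  refine Finset.measurable_sum _ fun σ _ => ?_
  have : (fun x : Fin m → X =>
      Equiv.Perm.sign σ • ∏ i, (Matrix.of fun i j => K (x i) (x j)) (σ i) i)
      = fun x : Fin m → X =>
      ((Equiv.Perm.sign σ : ℤ) : ℝ) * ∏ i, K (x (σ i)) (x i) := by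
    funext x
    rw [Units.smul_def, zsmul_eq_mul]
    norm_num [Matrix.of_apply]
  rw [this]
  refine Measurable.const_mul ?_ _
  refine Finset.measurable_prod _ fun i _ => ?_
  have h1 : Measurable (fun x : Fin m → X => (x (σ i), x i)) :=
    (measurable_pi_apply (σ i)).prodMk (measurable_pi_apply i)
  exact hK.comp h1

section
variable {X : Type*} [MeasurableSpace X] {ν : Measure X} [IsFiniteMeasure ν]

lemma integrable_det_kernel {K : X → X → ℝ} (hK : Measurable (Function.uncurry K))
    {M : ℝ} (hM : 0 ≤ M) (hKb : ∀ x y, |K x y| ≤ M) (m : ℕ) :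
    Integrable (fun x : Fin m → X => (Matrix.of fun i j => K (x i) (x j)).det)
      (Measure.pi fun _ : Fin m => ν) := by
  refine ⟨(measurable_det_kernel hK m).aestronglyMeasurable, ?_⟩
  refine HasFiniteIntegral.of_bounded (C := Real.sqrt m ^ m * M ^ m) ?_
  refine ae_of_all _ fun x => ?_
  rw [Real.norm_eq_abs]
  exact det_le_of_bound _ M hM fun i j => hKb _ _

lemma pi_univ_toReal (m : ℕ) :
    ((Measure.pi fun _ : Fin m => ν) Set.univ).toReal = (ν Set.univ).toReal ^ m := by
  rw [Measure.pi_univ, Finset.prod_const, Finset.card_univ, Fintype.card_fin,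
    ENNReal.toReal_pow]

lemma abs_integral_det_le {K : X → X → ℝ} (hK : Measurable (Function.uncurry K))
    {M : ℝ} (hM : 0 ≤ M) (hKb : ∀ x y, |K x y| ≤ M) (m : ℕ) :
    |∫ x : Fin m → X, (Matrix.of fun i j => K (x i) (x j)).det
      ∂(Measure.pi fun _ => ν)|
      ≤ Real.sqrt m ^ m * M ^ m * (ν Set.univ).toReal ^ m := by
  rw [← Real.norm_eq_abs, ← pi_univ_toReal m]
  refine norm_integral_le_of_norm_le_const (ae_of_all _ fun x => ?_)
  rw [Real.norm_eq_abs]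
  exact det_le_of_bound _ M hM fun i j => hKb _ _

lemma abs_integral_det_sub_le {K L : X → X → ℝ} (hK : Measurable (Function.uncurry K))
    (hL : Measurable (Function.uncurry L)) {M δ : ℝ} (hM : 0 ≤ M) (hδ : 0 ≤ δ)
    (hKb : ∀ x y, |K x y| ≤ M) (hLb : ∀ x y, |L x y| ≤ M)
    (hKL : ∀ x y, |K x y - L x y| ≤ δ) (m : ℕ) :
    |(∫ x : Fin m → X, (Matrix.of fun i j => K (x i) (x j)).det
        ∂(Measure.pi fun _ => ν)) -
      ∫ x : Fin m → X, (Matrix.of fun i j => L (x i) (x j)).det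
        ∂(Measure.pi fun _ => ν)|
      ≤ m * Real.sqrt m ^ m * M ^ (m - 1) * δ * (ν Set.univ).toReal ^ m := by
  rw [← integral_sub (integrable_det_kernel hK hM hKb m)
    (integrable_det_kernel hL hM hLb m), ← Real.norm_eq_abs, ← pi_univ_toReal m]
  refine norm_integral_le_of_norm_le_const (ae_of_all _ fun x => ?_)
  rw [Real.norm_eq_abs]
  exact det_sub_le _ _ hM hδ (fun i j => hKb _ _) (fun i j => hLb _ _)
    (fun i j => hKL _ _)

end

/-- Local Lipschitz continuity of the Fredholm determinant with respect to uniform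
convergence of kernels on a finite measure space: for bounded measurable kernels
`K, L` with `‖K‖_∞, ‖L‖_∞ ≤ M`,
`|det(I-K) - det(I-L)| ≤ c(M, ν(X)) · ‖K - L‖_∞`
for a constant depending only on `M` and `ν(X)`. -/
theorem fredholmDet_lipschitz {X : Type*} [MeasurableSpace X] (ν : Measure X)
    [IsFiniteMeasure ν] (M : ℝ) (hM : 0 ≤ M) :
    ∃ c : ℝ, ∀ K L : X → X → ℝ,
      Measurable (Function.uncurry K) → Measurable (Function.uncurry L) →
      (∀ x y, |K x y| ≤ M) → (∀ x y, |L x y| ≤ M) →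
      ∀ δ : ℝ, (∀ x y, |K x y - L x y| ≤ δ) →
      |fredholmDet ν K - fredholmDet ν L| ≤ c * δ := by
  rcases isEmpty_or_nonempty X with hX | hX
  · refine ⟨0, fun K L _ _ _ _ δ _ => ?_⟩
    have hKL : K = L := funext fun x => isEmptyElim x
    rw [hKL, sub_self, abs_zero, zero_mul]
  · set r : ℝ := (ν Set.univ).toReal with hr
    have hr0 : 0 ≤ r := ENNReal.toReal_nonneg
    set q : ℝ := max 1 (M * r) with hq
    have hq1 : (1:ℝ) ≤ q := le_max_left _ _
    have hq0 : (0:ℝ) ≤ q := le_trans zero_le_one hq1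
    have hMr : 0 ≤ M * r := mul_nonneg hM hr0
    have hMrq : M * r ≤ q := le_max_right _ _
    set s : ℕ → ℝ := fun m => (m + 1) * Real.sqrt m ^ m * q ^ m / m.factorial with hs
    have hs0 : ∀ m, 0 ≤ s m := fun m => by
      have : (0:ℝ) < m.factorial := by exact_mod_cast m.factorial_pos
      positivity
    have hS : Summable s := summable_master hq0
    refine ⟨r * (∑' m, s m), fun K L hK hL hKb hLb δ hKL => ?_⟩
    obtain ⟨x0⟩ := hX
    have hδ0 : 0 ≤ δ := le_trans (abs_nonneg _) (hKL x0 x0)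
    set a : ℕ → ℝ := fun m => ((-1 : ℝ) ^ m / (m.factorial : ℝ)) *
      ∫ x : Fin m → X, Matrix.det (Matrix.of fun i j => K (x i) (x j))
        ∂(Measure.pi fun _ => ν) with haa
    set b : ℕ → ℝ := fun m => ((-1 : ℝ) ^ m / (m.factorial : ℝ)) *
      ∫ x : Fin m → X, Matrix.det (Matrix.of fun i j => L (x i) (x j))
        ∂(Measure.pi fun _ => ν) with hbb
    have hfact : ∀ m : ℕ, (0:ℝ) < m.factorial := fun m => by
      exact_mod_cast m.factorial_pos
    have habs : ∀ m : ℕ, |((-1 : ℝ) ^ m / (m.factorial : ℝ))| = 1 / m.factorial := by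
      intro m
      rw [abs_div, abs_pow, abs_neg, abs_one, one_pow, abs_of_pos (hfact m)]
    -- termwise bound for a
    have hbda : ∀ (J : X → X → ℝ), Measurable (Function.uncurry J) →
        (∀ x y, |J x y| ≤ M) → ∀ m : ℕ,
        |((-1 : ℝ) ^ m / (m.factorial : ℝ)) *
          ∫ x : Fin m → X, Matrix.det (Matrix.of fun i j => J (x i) (x j))
            ∂(Measure.pi fun _ => ν)| ≤ s m := by
      intro J hJ hJb m
      rw [abs_mul, habs m]
      calc (1 / m.factorial : ℝ) * |∫ x : Fin m → X,
            Matrix.det (Matrix.of fun i j => J (x i) (x j)) ∂(Measure.pi fun _ => ν)|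
          ≤ (1 / m.factorial) * (Real.sqrt m ^ m * M ^ m * r ^ m) := by
            have := abs_integral_det_le (ν := ν) hJ hM hJb m
            gcongr
          _ ≤ s m := by
            rw [hs]; dsimp only
            have h1 : M ^ m * r ^ m ≤ q ^ m := by
              rw [← mul_pow]; exact pow_le_pow_left₀ hMr hMrq m
            have h3 : (0:ℝ) ≤ Real.sqrt m ^ m := by positivity
            have hf := hfact m
            calc (1 / m.factorial : ℝ) * (Real.sqrt m ^ m * M ^ m * r ^ m)
                = (Real.sqrt m ^ m * (M ^ m * r ^ m)) * (1 / m.factorial) := by ring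
              _ ≤ ((m + 1) * (Real.sqrt m ^ m * q ^ m)) * (1 / m.factorial) := by
                  refine mul_le_mul_of_nonneg_right ?_ (by positivity)
                  have h4 : Real.sqrt m ^ m * (M ^ m * r ^ m) ≤ Real.sqrt m ^ m * q ^ m :=
                    mul_le_mul_of_nonneg_left h1 h3
                  nlinarith [h4, mul_nonneg (Nat.cast_nonneg (α := ℝ) m) (mul_nonneg h3 (pow_nonneg hq0 m))]
              _ = (m + 1) * Real.sqrt m ^ m * q ^ m / m.factorial := by ring
    have hsuma : Summable a := by
      refine summable_abs_iff.mp (Summable.of_nonneg_of_le (fun m => abs_nonneg _)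
        (fun m => hbda K hK hKb m) hS)
    have hsumb : Summable b := by
      refine summable_abs_iff.mp (Summable.of_nonneg_of_le (fun m => abs_nonneg _)
        (fun m => hbda L hL hLb m) hS)
    -- termwise bound for difference
    have hkey : ∀ m : ℕ, |a m - b m| ≤ (r * s m) * δ := by
      intro m
      rw [haa, hbb]
      dsimp only
      rw [← mul_sub, abs_mul, habs m]
      have h1 := abs_integral_det_sub_le (ν := ν) hK hL hM hδ0 hKb hLb hKL m
      calc (1 / m.factorial : ℝ) * |(∫ x : Fin m → X,
              Matrix.det (Matrix.of fun i j => K (x i) (x j)) ∂(Measure.pi fun _ => ν)) -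
            ∫ x : Fin m → X,
              Matrix.det (Matrix.of fun i j => L (x i) (x j)) ∂(Measure.pi fun _ => ν)|
          ≤ (1 / m.factorial) * (m * Real.sqrt m ^ m * M ^ (m - 1) * δ * r ^ m) := by
            gcongr
        _ ≤ (r * s m) * δ := by
            have hcore : (m:ℝ) * M ^ (m-1) * r ^ m ≤ r * ((m + 1) * q ^ m) := by
              cases m with
              | zero => simp; positivity
              | succ t =>
                have h4 : (M * r) ^ t ≤ q ^ (t + 1) :=
                  le_trans (pow_le_pow_left₀ hMr hMrq t) (pow_le_pow_right₀ hq1 (Nat.le_succ t))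
                have e : ((t:ℝ) + 1) * M ^ t * r ^ (t+1) = r * (((t:ℝ) + 1) * (M * r) ^ t) := by
                  rw [mul_pow, pow_succ]; ring
                rw [Nat.succ_sub_one]
                push_cast
                rw [e]
                have h5 : (0:ℝ) ≤ (M * r) ^ t := pow_nonneg hMr t
                have h7 : ((t:ℝ)+1) * (M*r)^t ≤ ((t:ℝ)+1+1) * q^(t+1) :=
                  mul_le_mul (by linarith) h4 h5 (by linarith)
                have h8 := mul_le_mul_of_nonneg_left h7 hr0
                linarith [h8]
            calc (1 / m.factorial : ℝ) * (m * Real.sqrt m ^ m * M ^ (m - 1) * δ * r ^ m)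
                = ((m:ℝ) * M ^ (m-1) * r ^ m) * (Real.sqrt m ^ m * δ * (1 / m.factorial)) := by
                  ring
              _ ≤ (r * ((m + 1) * q ^ m)) * (Real.sqrt m ^ m * δ * (1 / m.factorial)) := by
                  refine mul_le_mul_of_nonneg_right hcore ?_
                  have := hfact m
                  positivity
              _ = (r * ((m + 1) * Real.sqrt m ^ m * q ^ m / m.factorial)) * δ := by
                  ring
    -- conclude
    have heqK : fredholmDet ν K = ∑' m, a m := rfl
    have heqL : fredholmDet ν L = ∑' m, b m := rfl
    have hsd : Summable (fun m => (r * s m) * δ) := (hS.mul_left r).mul_right δ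
    have habs_sum : Summable (fun m => |a m - b m|) :=
      Summable.of_nonneg_of_le (fun _ => abs_nonneg _) hkey hsd
    rw [heqK, heqL, ← hsuma.tsum_sub hsumb]
    calc |∑' m, (a m - b m)| ≤ ∑' m, |a m - b m| := by
          have := norm_tsum_le_tsum_norm (f := fun m => a m - b m)
            (by simpa [Real.norm_eq_abs] using habs_sum)
          simpa [Real.norm_eq_abs] using this
      _ ≤ ∑' m, (r * s m) * δ := Summable.tsum_le_tsum hkey habs_sum hsd
      _ = (r * (∑' m, s m)) * δ := by
          rw [tsum_mul_right, tsum_mul_left]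
end
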